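/- For every real μ > 0, the quotient ψ_μ(θ)/(|θ|^(1/s − 1)·θ) tends to μ^(−1/s) as θ → 0 with θ ≠ 0. -/

import Mathlib

open Real Filter Topology

noncomputable def g (s q μ ζ : ℝ) : ℝ := μ * |ζ| ^ (s - 1) * ζ + |ζ| ^ (q - 1) * ζ

theorem stmt_4 (s q : ℝ) (hs : 0 < s) (hsq : s < q) (μ : ℝ) (hμ : 0 < μ)
    (ψ : ℝ → ℝ)
    (hψ_right : ∀ θ : ℝ, g s q μ (ψ θ) = θ)
    (hψ_left : ∀ ζ : ℝ, ψ (g s q μ ζ) = ζ) :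
    Tendsto (fun θ : ℝ => ψ θ / (|θ| ^ (1 / s - 1) * θ))
      (nhdsWithin 0 {(0 : ℝ)}ᶜ) (nhds (μ ^ (-(1 / s)))) := by
  have hs0 : s ≠ 0 := hs.ne'
  have hg0 : g s q μ 0 = 0 := by simp [g]
  have hψ0 : ψ 0 = 0 := by have h := hψ_left 0; rwa [hg0] at h
  -- |g ζ| = μ |ζ|^s + |ζ|^q
  have habs : ∀ ζ : ℝ, |g s q μ ζ| = μ * |ζ| ^ s + |ζ| ^ q := by
    intro ζ
    rcases eq_or_ne ζ 0 with rfl | hζ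
    · simp [hg0, Real.zero_rpow hs.ne', Real.zero_rpow (hs.trans hsq).ne']
    · have ha : (0:ℝ) < |ζ| := abs_pos.mpr hζ
      have hc : 0 < μ * |ζ| ^ (s-1) + |ζ| ^ (q-1) :=
        add_pos (mul_pos hμ (Real.rpow_pos_of_pos ha _)) (Real.rpow_pos_of_pos ha _)
      have hgζ : g s q μ ζ = (μ * |ζ| ^ (s-1) + |ζ| ^ (q-1)) * ζ := by
        simp only [g]; ring
      rw [hgζ, abs_mul, abs_of_pos hc, add_mul, mul_assoc,
        ← Real.rpow_add_one ha.ne' (s-1), ← Real.rpow_add_one ha.ne' (q-1),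
        sub_add_cancel, sub_add_cancel]
  -- squeeze bound
  have hbound : ∀ θ : ℝ, |ψ θ| ≤ (|θ| / μ) ^ (1/s) := by
    intro θ
    have h0 := habs (ψ θ)
    rw [hψ_right] at h0
    have hq0 : (0:ℝ) ≤ |ψ θ| ^ q := Real.rpow_nonneg (abs_nonneg _) q
    have h1 : μ * |ψ θ| ^ s ≤ |θ| := by linarith [h0.ge]
    have h2 : |ψ θ| ^ s ≤ |θ| / μ := (le_div_iff₀ hμ).mpr (by linarith)
    have h3 := Real.rpow_le_rpow (Real.rpow_nonneg (abs_nonneg _) s) h2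
      (le_of_lt (by positivity : (0:ℝ) < 1/s))
    rwa [← Real.rpow_mul (abs_nonneg _), mul_one_div, div_self hs0, Real.rpow_one] at h3
  -- ψ tends to 0 within ≠0
  have hψne : ∀ θ : ℝ, θ ≠ 0 → ψ θ ≠ 0 := by
    intro θ hθ h
    exact hθ (by rw [← hψ_right θ, h, hg0])
  have hψ_tendsto : Tendsto ψ (𝓝[≠] (0:ℝ)) (𝓝[≠] (0:ℝ)) := by
    apply tendsto_nhdsWithin_of_tendsto_nhds_of_eventually_within
    · have hcont : Tendsto (fun θ : ℝ => (|θ| / μ) ^ (1/s)) (𝓝 0) (𝓝 0) := by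
        have h : ContinuousAt (fun θ : ℝ => (|θ| / μ) ^ (1/s)) 0 := by
          apply ContinuousAt.rpow_const (continuous_abs.continuousAt.div_const μ)
          right; positivity
        simpa [Real.zero_rpow (one_div_pos.mpr hs).ne', Real.zero_rpow (inv_ne_zero hs0)] using h.tendsto
      exact squeeze_zero_norm hbound (hcont.mono_left nhdsWithin_le_nhds)
    · filter_upwards [self_mem_nhdsWithin] with θ hθ
      exact hψne θ hθ
  -- key algebraic identity
  have key : ∀ ζ : ℝ, ζ ≠ 0 →
      ψ (g s q μ ζ) / (|g s q μ ζ| ^ (1/s - 1) * g s q μ ζ)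
        = (μ + |ζ| ^ (q - s)) ^ (-(1/s)) := by
    intro ζ hζ
    have ha : (0:ℝ) < |ζ| := abs_pos.mpr hζ
    set c := μ * |ζ| ^ (s-1) + |ζ| ^ (q-1) with hc_def
    have hc : 0 < c :=
      add_pos (mul_pos hμ (Real.rpow_pos_of_pos ha _)) (Real.rpow_pos_of_pos ha _)
    have hgζ : g s q μ ζ = c * ζ := by simp only [g, hc_def]; ring
    have habsg : |g s q μ ζ| = c * |ζ| := by rw [hgζ, abs_mul, abs_of_pos hc]
    have hsum : μ + |ζ| ^ (q - s) = |ζ| ^ (1 - s) * c := by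
      rw [hc_def, mul_add, ← mul_assoc, mul_comm (|ζ| ^ (1-s)) μ, mul_assoc,
        ← Real.rpow_add ha, ← Real.rpow_add ha]
      norm_num
    rw [hψ_left, habsg, hgζ, hsum]
    have e1 : (c * |ζ|) ^ (1/s - 1) = c ^ (1/s - 1) * |ζ| ^ (1/s - 1) :=
      Real.mul_rpow hc.le (abs_nonneg _)
    have e2 : (|ζ| ^ (1 - s) * c) ^ (-(1/s))
        = |ζ| ^ ((1 - s) * (-(1/s))) * c ^ (-(1/s)) := by
      rw [Real.mul_rpow (Real.rpow_nonneg (abs_nonneg _) _) hc.le,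
        ← Real.rpow_mul (abs_nonneg _)]
    rw [e1, e2]
    have hden : c ^ (1/s - 1) * |ζ| ^ (1/s - 1) * (c * ζ) ≠ 0 := by
      have h1 : (0:ℝ) < c ^ (1/s - 1) := Real.rpow_pos_of_pos hc _
      have h2 : (0:ℝ) < |ζ| ^ (1/s - 1) := Real.rpow_pos_of_pos ha _
      exact mul_ne_zero (mul_ne_zero h1.ne' h2.ne') (mul_ne_zero hc.ne' hζ)
    have hA : |ζ| ^ ((1 - s) * -(1/s)) * |ζ| ^ (1/s - 1) = 1 := by
      rw [← Real.rpow_add ha, show (1 - s) * -(1/s) + (1/s - 1) = 0 by field_simp; ring,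
        Real.rpow_zero]
    have hC : c ^ (-(1/s)) * c ^ (1/s - 1) * c = 1 := by
      rw [← Real.rpow_add hc, ← Real.rpow_add_one hc.ne',
        show -(1/s) + (1/s - 1) + 1 = 0 by ring, Real.rpow_zero]
    rw [div_eq_iff hden]
    calc ζ = (|ζ| ^ ((1 - s) * -(1/s)) * |ζ| ^ (1/s - 1))
        * (c ^ (-(1/s)) * c ^ (1/s - 1) * c) * ζ := by rw [hA, hC]; ring
      _ = |ζ| ^ ((1 - s) * -(1/s)) * c ^ (-(1/s))
        * (c ^ (1/s - 1) * |ζ| ^ (1/s - 1) * (c * ζ)) := by ring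
  -- limit of the substituted function
  have hG : Tendsto (fun ζ : ℝ => (μ + |ζ| ^ (q - s)) ^ (-(1/s))) (𝓝[≠] (0:ℝ))
      (𝓝 (μ ^ (-(1/s)))) := by
    have h1 : Tendsto (fun ζ : ℝ => μ + |ζ| ^ (q - s)) (𝓝 0) (𝓝 μ) := by
      have h : ContinuousAt (fun ζ : ℝ => μ + |ζ| ^ (q - s)) 0 := by
        apply continuousAt_const.add
        apply ContinuousAt.rpow_const continuous_abs.continuousAt
        right; linarith
      have h0 : μ + |(0:ℝ)| ^ (q - s) = μ := by
        simp [Real.zero_rpow (sub_pos.mpr hsq).ne']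
      simpa [Real.zero_rpow (sub_pos.mpr hsq).ne'] using h.tendsto
    have h2 : ContinuousAt (fun x : ℝ => x ^ (-(1/s))) μ :=
      Real.continuousAt_rpow_const μ (-(1/s)) (Or.inl hμ.ne')
    exact (h2.tendsto.comp h1).mono_left nhdsWithin_le_nhds
  have hcomp : Tendsto ((fun ζ : ℝ =>
      ψ (g s q μ ζ) / (|g s q μ ζ| ^ (1/s - 1) * g s q μ ζ)) ∘ ψ)
      (𝓝[≠] (0:ℝ)) (𝓝 (μ ^ (-(1/s)))) := by
    refine Tendsto.comp ?_ hψ_tendsto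
    refine Tendsto.congr' ?_ hG
    filter_upwards [self_mem_nhdsWithin] with ζ hζ
    exact (key ζ hζ).symm
  refine hcomp.congr fun θ => ?_
  simp only [Function.comp]
  rw [hψ_right]
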